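/- The optimal Selberg sieve weights λ(d) = (μ(d)/G(z,Ω)) · ∏_{p ∣ d} (p/(p − |Ω(p)|)) · ∑_{g < z/d, gcd(d,g)=1} μ(g)² H(g, Ω) satisfy |λ(d)| ≤ 1 for all squarefree d < z, and λ(1) = 1. -/

import Mathlib

open Finset

open scoped Classical in
theorem selberg_weights_bounded (z : ℕ) (hz : 1 < z) (w : ℕ → ℕ)
    (hp : ∀ p : ℕ, p.Prime → 0 < w p ∧ w p < p)
    (H : ℕ → ℝ)
    (hH : ∀ q : ℕ, H q = ∏ p ∈ q.primeFactors, (w p : ℝ) / ((p : ℝ) - w p))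
    (G : ℝ)
    (hG : G = ∑ q ∈ Finset.range z, (ArithmeticFunction.moebius q : ℝ) ^ 2 * H q)
    (lam : ℕ → ℝ)
    (hlam : ∀ d : ℕ, lam d = (ArithmeticFunction.moebius d : ℝ) / G *
      (∏ p ∈ d.primeFactors, (p : ℝ) / ((p : ℝ) - w p)) *
      ∑ g ∈ (Finset.range z).filter (fun g => d * g < z ∧ Nat.Coprime d g),
        (ArithmeticFunction.moebius g : ℝ) ^ 2 * H g) :
    lam 1 = 1 ∧ ∀ d : ℕ, Squarefree d → d < z → |lam d| ≤ 1 := by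
  have hHnn : ∀ q : ℕ, 0 ≤ H q := by
    intro q
    rw [hH]
    refine Finset.prod_nonneg fun p hp' => ?_
    have hpp := Nat.prime_of_mem_primeFactors hp'
    have h2 : (w p : ℝ) < p := by exact_mod_cast (hp p hpp).2
    exact div_nonneg (by positivity) (by linarith)
  have hG1 : (1 : ℝ) ≤ G := by
    rw [hG]
    have h1z : (1 : ℕ) ∈ Finset.range z := Finset.mem_range.mpr hz
    have := Finset.single_le_sum
      (f := fun q => (ArithmeticFunction.moebius q : ℝ) ^ 2 * H q)
      (fun q _ => mul_nonneg (sq_nonneg _) (hHnn q)) h1z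
    simpa [hH 1, ArithmeticFunction.moebius_apply_one] using this
  have hGpos : 0 < G := lt_of_lt_of_le one_pos hG1
  have hlam1 : lam 1 = 1 := by
    have hfil : (Finset.range z).filter (fun g => 1 * g < z ∧ Nat.Coprime 1 g)
        = Finset.range z := by
      refine Finset.filter_true_of_mem fun g hg => ?_
      exact ⟨by simpa using Finset.mem_range.mp hg, Nat.coprime_one_left g⟩
    rw [hlam 1, hfil, ← hG]
    simp only [ArithmeticFunction.moebius_apply_one, Nat.primeFactors_one,
      Finset.prod_empty, Int.cast_one, mul_one]
    field_simp
  refine ⟨hlam1, fun d hd hdz => ?_⟩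
  have hd0 : 0 < d := hd.ne_zero |>.bot_lt
  -- the product, rewritten as a sum over subsets of prime factors
  have hPsum : (∏ p ∈ d.primeFactors, (p : ℝ) / ((p : ℝ) - w p))
      = ∑ t ∈ d.primeFactors.powerset, H (∏ p ∈ t, p) := by
    have h1 : (∏ p ∈ d.primeFactors, (p : ℝ) / ((p : ℝ) - w p))
        = ∏ p ∈ d.primeFactors, ((w p : ℝ) / ((p : ℝ) - w p) + 1) := by
      refine Finset.prod_congr rfl fun p hp' => ?_
      have hpp := Nat.prime_of_mem_primeFactors hp'
      have h2 : (w p : ℝ) < p := by exact_mod_cast (hp p hpp).2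
      have hne : (p : ℝ) - w p ≠ 0 := by linarith
      field_simp
      ring
    rw [h1, Finset.prod_add]
    refine Finset.sum_congr rfl fun t ht => ?_
    have hts := Finset.mem_powerset.mp ht
    have hprimes : ∀ p ∈ t, p.Prime := fun p hpt =>
      Nat.prime_of_mem_primeFactors (hts hpt)
    rw [hH, Nat.primeFactors_prod hprimes]
    simp
  -- key inequality
  set T := (Finset.range z).filter (fun g => d * g < z ∧ Nat.Coprime d g) with hT
  set S := ∑ g ∈ T, (ArithmeticFunction.moebius g : ℝ) ^ 2 * H g with hS
  have hSnn : 0 ≤ S := Finset.sum_nonneg fun g _ => mul_nonneg (sq_nonneg _) (hHnn g)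
  set P := ∏ p ∈ d.primeFactors, (p : ℝ) / ((p : ℝ) - w p) with hP
  have hPnn : 0 ≤ P := by
    rw [hP]
    refine Finset.prod_nonneg fun p hp' => ?_
    have hpp := Nat.prime_of_mem_primeFactors hp'
    have h2 : (w p : ℝ) < p := by exact_mod_cast (hp p hpp).2
    exact div_nonneg (by positivity) (by linarith)
  -- facts about members
  have hTmem : ∀ g ∈ T, d * g < z ∧ Nat.Coprime d g := by
    intro g hg
    exact (Finset.mem_filter.mp hg).2
  have key : P * S ≤ G := by
    rw [hPsum, hS, Finset.sum_mul_sum, ← Finset.sum_product']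
    set D := (d.primeFactors.powerset ×ˢ T).filter (fun x => Squarefree x.2) with hD
    have hzero : ∑ x ∈ d.primeFactors.powerset ×ˢ T,
        H (∏ p ∈ x.1, p) * ((ArithmeticFunction.moebius x.2 : ℝ) ^ 2 * H x.2)
        = ∑ x ∈ D,
        H (∏ p ∈ x.1, p) * ((ArithmeticFunction.moebius x.2 : ℝ) ^ 2 * H x.2) := by
      symm
      refine Finset.sum_subset (Finset.filter_subset _ _) fun x hx hx' => ?_
      have : ¬ Squarefree x.2 := by
        intro h
        exact hx' (Finset.mem_filter.mpr ⟨hx, h⟩)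
      rw [ArithmeticFunction.moebius_eq_zero_of_not_squarefree this]
      simp
    rw [hzero]
    -- basic facts for x ∈ D
    have hfacts : ∀ x ∈ D, (∀ p ∈ x.1, p.Prime) ∧ (∏ p ∈ x.1, p) ∣ d ∧
        Squarefree x.2 ∧ d * x.2 < z ∧ Nat.Coprime d x.2 := by
      intro x hx
      obtain ⟨hx1, hx2⟩ := Finset.mem_filter.mp hx
      obtain ⟨ht, hg⟩ := Finset.mem_product.mp hx1
      have hts := Finset.mem_powerset.mp ht
      have hprimes : ∀ p ∈ x.1, p.Prime := fun p hpt =>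
        Nat.prime_of_mem_primeFactors (hts hpt)
      have hdvd : (∏ p ∈ x.1, p) ∣ d :=
        dvd_trans (Finset.prod_dvd_prod_of_subset _ _ _ hts)
          (Nat.prod_primeFactors_dvd d)
      exact ⟨hprimes, hdvd, hx2, (hTmem _ hg).1, (hTmem _ hg).2⟩
    have hterm : ∀ x ∈ D,
        H (∏ p ∈ x.1, p) * ((ArithmeticFunction.moebius x.2 : ℝ) ^ 2 * H x.2)
        = (ArithmeticFunction.moebius ((∏ p ∈ x.1, p) * x.2) : ℝ) ^ 2 *
          H ((∏ p ∈ x.1, p) * x.2) := by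
      intro x hx
      obtain ⟨hprimes, hdvd, hsf, hlt, hco⟩ := hfacts x hx
      set a := ∏ p ∈ x.1, p with ha
      have ha0 : a ≠ 0 := by
        rw [ha]
        exact Finset.prod_ne_zero_iff.mpr fun p hpt => (hprimes p hpt).pos.ne'
      have hg0 : x.2 ≠ 0 := hsf.ne_zero
      have hasf : Squarefree a := hd.squarefree_of_dvd hdvd
      have hcoag : Nat.Coprime a x.2 := Nat.Coprime.coprime_dvd_left hdvd hco
      have hqsf : Squarefree (a * x.2) := (Nat.squarefree_mul hcoag).mpr ⟨hasf, hsf⟩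
      have hmu1 : (ArithmeticFunction.moebius (a * x.2) : ℝ) ^ 2 = 1 := by
        exact_mod_cast ArithmeticFunction.moebius_sq_eq_one_of_squarefree hqsf
      have hmu2 : (ArithmeticFunction.moebius x.2 : ℝ) ^ 2 = 1 := by
        exact_mod_cast ArithmeticFunction.moebius_sq_eq_one_of_squarefree hsf
      have hHmul : H (a * x.2) = H a * H x.2 := by
        rw [hH (a * x.2), hH a, hH x.2, Nat.primeFactors_mul ha0 hg0,
          Finset.prod_union (hcoag.disjoint_primeFactors)]
      rw [hmu1, hmu2, hHmul]
      ring
    rw [Finset.sum_congr rfl hterm]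
    have hinj : ∀ x ∈ D, ∀ y ∈ D,
        (∏ p ∈ x.1, p) * x.2 = (∏ p ∈ y.1, p) * y.2 → x = y := by
      intro x hx y hy hxy
      obtain ⟨hprx, hdx, hsfx, _, hcox⟩ := hfacts x hx
      obtain ⟨hpry, hdy, hsfy, _, hcoy⟩ := hfacts y hy
      have hax0 : 0 < ∏ p ∈ x.1, p :=
        Finset.prod_pos fun p hpt => (hprx p hpt).pos
      have h1 : (∏ p ∈ x.1, p) ∣ (∏ p ∈ y.1, p) := by
        have hdd : (∏ p ∈ x.1, p) ∣ (∏ p ∈ y.1, p) * y.2 := hxy ▸ Dvd.intro _ rfl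
        exact (Nat.Coprime.coprime_dvd_left hdx hcoy).dvd_of_dvd_mul_right hdd
      have h2 : (∏ p ∈ y.1, p) ∣ (∏ p ∈ x.1, p) := by
        have hdd : (∏ p ∈ y.1, p) ∣ (∏ p ∈ x.1, p) * x.2 := hxy ▸ Dvd.intro _ rfl
        exact (Nat.Coprime.coprime_dvd_left hdy hcox).dvd_of_dvd_mul_right hdd
      have heqa : (∏ p ∈ x.1, p) = (∏ p ∈ y.1, p) := Nat.dvd_antisymm h1 h2
      have heqg : x.2 = y.2 := by
        have := hxy
        rw [heqa] at this
        exact Nat.eq_of_mul_eq_mul_left (heqa ▸ hax0) this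
      have heqt : x.1 = y.1 := by
        have := congrArg Nat.primeFactors heqa
        rwa [Nat.primeFactors_prod hprx, Nat.primeFactors_prod hpry] at this
      exact Prod.ext heqt heqg
    rw [← Finset.sum_image (f := fun q => (ArithmeticFunction.moebius q : ℝ) ^ 2 * H q)
      hinj, hG]
    refine Finset.sum_le_sum_of_subset_of_nonneg ?_
      (fun q _ _ => mul_nonneg (sq_nonneg _) (hHnn q))
    intro q hq
    obtain ⟨x, hx, rfl⟩ := Finset.mem_image.mp hq
    obtain ⟨hprx, hdx, hsfx, hlt, _⟩ := hfacts x hx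
    have hle : (∏ p ∈ x.1, p) ≤ d := Nat.le_of_dvd hd0 hdx
    have : (∏ p ∈ x.1, p) * x.2 ≤ d * x.2 := Nat.mul_le_mul_right _ hle
    exact Finset.mem_range.mpr (lt_of_le_of_lt this hlt)
  -- conclude
  rw [hlam d, ← hT, ← hS, ← hP]
  rw [abs_mul, abs_mul, abs_div]
  rw [abs_of_nonneg hPnn, abs_of_nonneg hSnn, abs_of_pos hGpos]
  have hmud : |(ArithmeticFunction.moebius d : ℝ)| = 1 := by
    have := ArithmeticFunction.abs_moebius_eq_one_of_squarefree hd
    calc |(ArithmeticFunction.moebius d : ℝ)|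
        = ((|ArithmeticFunction.moebius d| : ℤ) : ℝ) := by push_cast; ring
      _ = 1 := by rw [this]; norm_num
  rw [hmud, div_mul_eq_mul_div, div_mul_eq_mul_div, div_le_one hGpos]
  linarith [key]
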